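/- Let K be a compact topological space and let F be a k-quasi-complete Hausdorff locally convex space over ℝ. Then the space C(K, F) of continuous maps from K to F, equipped with the topology of uniform convergence (the compact-open topology), is k-quasi-complete. -/

import Mathlib

open Filter Topology Set Bornology Pointwise

/-- A sequence in a locally convex space is *Mackey-Cauchy* if there are a bounded
absolutely convex set `B` and a double sequence of nonnegative reals `c` tending to `0`
such that `x n - x m ∈ c n m • B` for all `n, m`. -/
def MackeyCauchy (E : Type*) [AddCommGroup E] [Module ℝ E] [TopologicalSpace E]
    (x : ℕ → E) : Prop :=
  ∃ (B : Set E) (c : ℕ → ℕ → ℝ),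
    IsVonNBounded ℝ B ∧ Convex ℝ B ∧ Balanced ℝ B ∧
    (∀ n m, 0 ≤ c n m) ∧
    Tendsto (fun p : ℕ × ℕ => c p.1 p.2) atTop (𝓝 (0 : ℝ)) ∧
    ∀ n m, x n - x m ∈ c n m • B

/-- A locally convex space is *Mackey-complete* if every Mackey-Cauchy sequence converges. -/
def MackeyComplete (E : Type*) [AddCommGroup E] [Module ℝ E] [TopologicalSpace E] : Prop :=
  ∀ x : ℕ → E, MackeyCauchy E x → ∃ l : E, Tendsto x atTop (𝓝 l)

/-- A locally convex space is *k-quasi-complete* if the closed absolutely convex hull of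
every compact set is compact. -/
def KQuasiComplete (E : Type*) [AddCommGroup E] [Module ℝ E] [TopologicalSpace E] : Prop :=
  ∀ K : Set E, IsCompact K → IsCompact (closure (convexHull ℝ (balancedHull ℝ K)))

section Aux

open Uniformity

/-- An absolutely convex (convex and balanced) superset of `s` contains
`convexHull ℝ (balancedHull ℝ s)`. -/
lemma convexHull_balancedHull_subset_aux {E : Type*} [AddCommGroup E] [Module ℝ E]
    {s t : Set E} (hst : s ⊆ t) (hc : Convex ℝ t) (hb : Balanced ℝ t) :
    convexHull ℝ (balancedHull ℝ s) ⊆ t :=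
  convexHull_min (hb.balancedHull_subset_of_subset hst) hc

variable {K : Type*} [TopologicalSpace K] [CompactSpace K]

/-- A compact set of continuous maps (with the compact convergence topology) is
equicontinuous. -/
lemma equicontinuous_of_isCompact_aux {F : Type*} [UniformSpace F]
    {S : Set C(K, F)} (hS : IsCompact S) :
    Equicontinuous ((↑) : S → K → F) := by
  intro x₀ U hU
  obtain ⟨W, hW, hWsymm, hWU⟩ := comp_symm_mem_uniformity_sets hU
  obtain ⟨V, hV, hVsymm, hVW⟩ := comp_symm_mem_uniformity_sets hW
  have hVW' : V ⊆ W := by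
    rintro ⟨a, b⟩ hab
    exact hVW ⟨b, hab, refl_mem_uniformity hV⟩
  have hE : {fg : C(K, F) × C(K, F) | ∀ x ∈ (Set.univ : Set K), (fg.1 x, fg.2 x) ∈ V}
      ∈ 𝓤 C(K, F) :=
    ContinuousMap.hasBasis_compactConvergenceUniformity.mem_of_mem
      (i := (Set.univ, V)) ⟨isCompact_univ, hV⟩
  obtain ⟨t, htfin, hts⟩ := hS.totallyBounded _ hE
  have hN : ∀ᶠ x in 𝓝 x₀, ∀ g ∈ t, (g x₀, g x) ∈ V := by
    rw [eventually_all_finite htfin]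
    intro g _
    exact g.continuous.continuousAt.preimage_mem_nhds (UniformSpace.ball_mem_nhds _ hV)
  filter_upwards [hN] with x hx f
  obtain ⟨g, hgt, hfg⟩ := mem_iUnion₂.mp (hts f.2)
  have h1 : ((f : C(K, F)) x₀, g x₀) ∈ V := hfg x₀ trivial
  have h2 : (g x₀, g x) ∈ V := hx g hgt
  have h3 : (g x, (f : C(K, F)) x) ∈ V := hVsymm.symm _ _ (hfg x trivial)
  exact hWU ⟨g x, hVW ⟨g x₀, h1, h2⟩, hVW' h3⟩

/-- Equicontinuity passes to the convex hull of the balanced hull. -/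
lemma equicontinuous_hull_aux {F : Type*} [AddCommGroup F] [Module ℝ F] [UniformSpace F]
    [IsUniformAddGroup F] [ContinuousSMul ℝ F] [LocallyConvexSpace ℝ F]
    {S : Set C(K, F)} (hS : Equicontinuous ((↑) : S → K → F)) :
    Equicontinuous ((↑) : (convexHull ℝ (balancedHull ℝ S) : Set C(K, F)) → K → F) := by
  intro x₀ U hU
  rw [uniformity_eq_comap_nhds_zero F] at hU
  obtain ⟨W, hW, hWU⟩ := hU
  obtain ⟨V, ⟨hVmem, hVbal, hVconv⟩, hVW⟩ := (nhds_hasBasis_absConvex ℝ F).mem_iff.mp hW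
  have hSV : ∀ᶠ x in 𝓝 x₀, ∀ f : S, (f : C(K, F)) x - (f : C(K, F)) x₀ ∈ V := by
    have h := hS x₀ ((fun p : F × F => p.2 - p.1) ⁻¹' V)
      (by rw [uniformity_eq_comap_nhds_zero F]; exact preimage_mem_comap hVmem)
    exact h.mono fun x hx f => hx f
  filter_upwards [hSV] with x hx g
  have hmem : (g : C(K, F)) ∈ {h : C(K, F) | h x - h x₀ ∈ V} := by
    refine convexHull_balancedHull_subset_aux ?_ ?_ ?_ g.2
    · exact fun f hf => hx ⟨f, hf⟩
    · intro h₁ h₁m h₂ h₂m a b ha hb hab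
      have h := hVconv h₁m h₂m ha hb hab
      have e : a • (h₁ x - h₁ x₀) + b • (h₂ x - h₂ x₀)
          = (a • h₁ + b • h₂) x - (a • h₁ + b • h₂) x₀ := by
        simp only [ContinuousMap.add_apply, ContinuousMap.smul_apply]
        module
      rwa [e] at h
    · intro a ha
      rintro _ ⟨h, hh, rfl⟩
      show (a • h) x - (a • h) x₀ ∈ V
      have e : (a • h) x - (a • h) x₀ = a • (h x - h x₀) := by
        simp only [ContinuousMap.smul_apply]; module
      rw [e]
      exact hVbal.smul_mem ha hh
  apply hWU
  exact hVW hmem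

end Aux

/-- For a compact topological space `K` and a k-quasi-complete Hausdorff
locally convex space `F` over `ℝ`, the space `C(K, F)` of continuous maps with the topology of
uniform convergence (the compact-open topology) is k-quasi-complete. -/
theorem kQuasiComplete_continuousMap
    (K : Type*) [TopologicalSpace K] [CompactSpace K]
    (F : Type*) [AddCommGroup F] [Module ℝ F] [TopologicalSpace F] [IsTopologicalAddGroup F]
    [ContinuousSMul ℝ F] [LocallyConvexSpace ℝ F] [T2Space F]
    (hF : KQuasiComplete F) :
    KQuasiComplete C(K, F) := by
  intro S hS
  letI : UniformSpace F := IsTopologicalAddGroup.rightUniformSpace F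
  haveI : IsUniformAddGroup F := isUniformAddGroup_of_addCommGroup
  have heq : Equicontinuous ((↑) : S → K → F) := equicontinuous_of_isCompact_aux hS
  have heq2 : Equicontinuous ((↑) : (convexHull ℝ (balancedHull ℝ S) : Set C(K, F)) → K → F) :=
    equicontinuous_hull_aux heq
  have hclemb : Topology.IsClosedEmbedding
      (UniformOnFun.ofFun {L : Set K | IsCompact L} ∘ (DFunLike.coe : C(K, F) → K → F)) := by
    refine ⟨ContinuousMap.isUniformEmbedding_toUniformOnFunIsCompact.isEmbedding, ?_⟩
    rw [show Set.range (UniformOnFun.ofFun {L : Set K | IsCompact L}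
          ∘ (DFunLike.coe : C(K, F) → K → F))
        = {f : UniformOnFun K F {L | IsCompact L} | Continuous (UniformOnFun.toFun _ f)} from
      ContinuousMap.range_toUniformOnFunIsCompact]
    exact UniformOnFun.isClosed_setOf_continuous
      CompactlyCoherentSpace.isCoherentWith
  refine ArzelaAscoli.isCompact_closure_of_isClosedEmbedding (fun L hL => hL) hclemb
    (fun L hL => heq2.equicontinuousOn L) ?_
  intro L hL x hx
  set Q := closure (convexHull ℝ (balancedHull ℝ ((fun f : C(K, F) => f x) '' S))) with hQdef
  have hQcompact : IsCompact Q := hF _ (hS.image (continuous_eval_const x))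
  have hQc : Convex ℝ Q := (convex_convexHull ℝ _).closure
  have hQb : Balanced ℝ Q := (balancedHull.balanced _).convexHull.closure
  refine ⟨Q, hQcompact, fun g hg => ?_⟩
  have : g ∈ {h : C(K, F) | h x ∈ Q} := by
    refine convexHull_balancedHull_subset_aux ?_ ?_ ?_ hg
    · exact fun f hf =>
        subset_closure (subset_convexHull ℝ _ (subset_balancedHull ℝ ⟨f, hf, rfl⟩))
    · intro h₁ h₁m h₂ h₂m a b ha hb hab
      simpa only [Set.mem_setOf_eq, ContinuousMap.add_apply, ContinuousMap.smul_apply]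
        using hQc h₁m h₂m ha hb hab
    · intro a ha
      rintro _ ⟨h, hh, rfl⟩
      simpa only [Set.mem_setOf_eq, ContinuousMap.smul_apply] using hQb.smul_mem ha hh
  exact this
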